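/- Let E be the elliptic curve over ℂ(u) defined by Y² = X³ − 2(u³ − 2)X² + u⁶X. Then the point P = (u³, 2u³) lies on E and has order exactly 4 in the group of ℂ(u)-rational points; in particular 2P = (0, 0), which is a point of order 2. -/

import Mathlib

open WeierstrassCurve

/-- The parameter `u` of the base `ℙ¹`, as an element of `ℂ(u)`. -/
noncomputable def uu : RatFunc ℂ := RatFunc.X

/-- Fibration 6: the elliptic curve `Y² = X³ − 2(u³ − 2)X² + u⁶X` over `ℂ(u)`. -/
noncomputable def W6 : WeierstrassCurve.Affine (RatFunc ℂ) :=
  { a₁ := 0, a₂ := -2 * (uu ^ 3 - 2), a₃ := 0, a₄ := uu ^ 6, a₆ := 0 }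

instance : CharZero (RatFunc ℂ) :=
  charZero_of_injective_algebraMap (algebraMap ℂ (RatFunc ℂ)).injective

lemma some_eq_some_aux {F : Type} [Field F] {W : WeierstrassCurve.Affine F}
    {x y x' y' : F} (h : W.Nonsingular x y) (h' : W.Nonsingular x' y')
    (hx : x = x') (hy : y = y') :
    WeierstrassCurve.Affine.Point.some _ _ h = WeierstrassCurve.Affine.Point.some _ _ h' := by
  subst hx; subst hy; rfl

lemma uu_ne_zero : uu ≠ 0 := RatFunc.X_ne_zero

lemma four_uu_ne : (4 : RatFunc ℂ) * uu ^ 3 ≠ 0 :=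
  mul_ne_zero (by norm_num) (pow_ne_zero _ uu_ne_zero)

open scoped Classical in
/-- The point `P = (u³, 2u³)` lies on the curve `Y² = X³ − 2(u³ − 2)X² + u⁶X`
over `ℂ(u)` and has order exactly 4; in particular `2P = (0, 0)`, a point of
order 2. -/
theorem fibration6_four_torsion :
    ∃ hP : W6.Nonsingular (uu ^ 3) (2 * uu ^ 3),
      addOrderOf (WeierstrassCurve.Affine.Point.some _ _ hP) = 4 ∧
      ∃ hT : W6.Nonsingular 0 0,
        (2 : ℤ) • WeierstrassCurve.Affine.Point.some _ _ hP =
          WeierstrassCurve.Affine.Point.some _ _ hT ∧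
        addOrderOf (WeierstrassCurve.Affine.Point.some _ _ hT) = 2 := by
  have hu3 : uu ^ 3 ≠ 0 := pow_ne_zero _ uu_ne_zero
  have hP : W6.Nonsingular (uu ^ 3) (2 * uu ^ 3) := by
    rw [WeierstrassCurve.Affine.nonsingular_iff, WeierstrassCurve.Affine.equation_iff]
    refine ⟨by simp only [W6]; ring, Or.inr ?_⟩
    simp only [W6]
    intro h
    exact four_uu_ne (by linear_combination h)
  have hT : W6.Nonsingular 0 0 := by
    rw [WeierstrassCurve.Affine.nonsingular_zero]
    exact ⟨rfl, Or.inr (by simpa [W6] using pow_ne_zero 6 uu_ne_zero)⟩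
  -- P is not its own negative
  have hPy : (2 * uu ^ 3 : RatFunc ℂ) ≠ W6.negY (uu ^ 3) (2 * uu ^ 3) := by
    simp only [WeierstrassCurve.Affine.negY, W6]
    intro h
    exact four_uu_ne (by linear_combination h)
  -- slope of the tangent at P is 2
  have hslope : W6.slope (uu ^ 3) (uu ^ 3) (2 * uu ^ 3) (2 * uu ^ 3) = 2 := by
    rw [WeierstrassCurve.Affine.slope_of_Y_ne rfl hPy]
    simp only [WeierstrassCurve.Affine.negY, W6]
    rw [div_eq_iff (fun h => four_uu_ne (by linear_combination h))]
    ring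
  have hX : W6.addX (uu ^ 3) (uu ^ 3)
      (W6.slope (uu ^ 3) (uu ^ 3) (2 * uu ^ 3) (2 * uu ^ 3)) = 0 := by
    rw [hslope]; simp only [WeierstrassCurve.Affine.addX, W6]; ring
  have hY : W6.addY (uu ^ 3) (uu ^ 3) (2 * uu ^ 3)
      (W6.slope (uu ^ 3) (uu ^ 3) (2 * uu ^ 3) (2 * uu ^ 3)) = 0 := by
    rw [WeierstrassCurve.Affine.addY, WeierstrassCurve.Affine.negAddY, hX, hslope]
    simp only [WeierstrassCurve.Affine.negY, W6]; ring
  have h2P : (2 : ℤ) • WeierstrassCurve.Affine.Point.some _ _ hP =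
      WeierstrassCurve.Affine.Point.some _ _ hT := by
    rw [two_zsmul, WeierstrassCurve.Affine.Point.add_self_of_Y_ne hPy]
    exact some_eq_some_aux _ _ hX hY
  have hTnegY : (0 : RatFunc ℂ) = W6.negY 0 0 := by
    simp [WeierstrassCurve.Affine.negY, W6]
  have h2T : (2 : ℕ) • WeierstrassCurve.Affine.Point.some _ _ hT = 0 := by
    rw [two_nsmul]
    exact WeierstrassCurve.Affine.Point.add_self_of_Y_eq hTnegY
  have hTne : WeierstrassCurve.Affine.Point.some _ _ hT ≠ 0 :=
    WeierstrassCurve.Affine.Point.some_ne_zero hT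
  have hordT : addOrderOf (WeierstrassCurve.Affine.Point.some _ _ hT) = 2 := by
    have hdvd : addOrderOf (WeierstrassCurve.Affine.Point.some _ _ hT) ∣ 2 :=
      addOrderOf_dvd_of_nsmul_eq_zero h2T
    rcases (Nat.Prime.eq_one_or_self_of_dvd Nat.prime_two _ hdvd) with h | h
    · exact absurd (AddMonoid.addOrderOf_eq_one_iff.mp h) hTne
    · exact h
  refine ⟨hP, ?_, hT, h2P, hordT⟩
  have h2Pn : (2 : ℕ) • WeierstrassCurve.Affine.Point.some _ _ hP =
      WeierstrassCurve.Affine.Point.some _ _ hT := by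
    rw [← h2P, two_nsmul, two_zsmul]
  have h4P : (4 : ℕ) • WeierstrassCurve.Affine.Point.some _ _ hP = 0 := by
    rw [(by norm_num : (4 : ℕ) = 2 * 2), mul_nsmul, h2Pn, h2T]
  have hdvd : addOrderOf (WeierstrassCurve.Affine.Point.some _ _ hP) ∣ 4 :=
    addOrderOf_dvd_of_nsmul_eq_zero h4P
  have hnd2 : ¬ addOrderOf (WeierstrassCurve.Affine.Point.some _ _ hP) ∣ 2 := by
    intro h
    have := addOrderOf_dvd_iff_nsmul_eq_zero.mp h
    rw [h2Pn] at this
    exact hTne this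
  rcases (Nat.dvd_prime_pow Nat.prime_two).mp ((by norm_num : (4:ℕ) = 2 ^ 2) ▸ hdvd) with ⟨k, hk, hkeq⟩
  interval_cases k
  · exact absurd (hkeq ▸ (dvd_refl 1).trans (one_dvd 2)) hnd2
  · exact absurd (hkeq ▸ dvd_refl 2) hnd2
  · simpa using hkeq
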